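/- Let α ∈ ℝ and ν, μ, λ ∈ ℂ satisfy Re μ > -1 and Re λ > -1. Then the fractional-type integral relation P_ν^{-μ-λ-1}(tanh α) · (cosh α)^{-μ-λ-1} = (1/Γ(λ+1)) · ∫_α^∞ (cosh s)^{-μ-2} · P_ν^{-μ}(tanh s) · (tanh s - tanh α)^λ ds holds, with principal complex powers of positive reals. -/

import Mathlib

noncomputable def pochC (a : ℂ) (n : ℕ) : ℂ := (ascPochhammer ℂ n).eval a

/-- Ferrers function of the first kind `P_ν^μ(x)`. -/
noncomputable def ferrersP (ν μ : ℂ) (x : ℝ) : ℂ :=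
  (((1 + x) / (1 - x) : ℝ) : ℂ) ^ (μ / 2) *
    ∑' n : ℕ, pochC (-ν) n * pochC (ν + 1) n /
        (Complex.Gamma ((n : ℂ) + 1 - μ) * (n.factorial : ℂ)) *
      (((1 - x) / 2 : ℝ) : ℂ) ^ n

open MeasureTheory Set Filter Topology

section Aux

noncomputable def gcAux (ν : ℂ) (n : ℕ) : ℂ :=
  pochC (-ν) n * pochC (ν + 1) n / (n.factorial : ℂ)

noncomputable def SAux (ν m : ℂ) (t : ℝ) : ℂ :=
  ∑' n : ℕ, gcAux ν n / Complex.Gamma ((n : ℂ) + 1 + m) * (((1 - t) / 2 : ℝ) : ℂ) ^ n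

noncomputable def FAux (ν μ lam : ℂ) (x : ℝ) (n : ℕ) (t : ℝ) : ℂ :=
  (gcAux ν n / Complex.Gamma ((n : ℂ) + 1 + μ) / 2 ^ n) *
    (((1 - t : ℝ) : ℂ) ^ (μ + (n : ℂ)) * ((t - x : ℝ) : ℂ) ^ lam)

lemma pochC_succ (a : ℂ) (n : ℕ) : pochC a (n+1) = pochC a n * (a + n) := by
  unfold pochC
  rw [ascPochhammer_succ_right]
  simp [Polynomial.eval_mul]

lemma cpowR_eq {a : ℝ} (ha : 0 < a) (c : ℂ) :
    ((a : ℝ) : ℂ) ^ c = Complex.exp ((Real.log a : ℂ) * c) := by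
  rw [Complex.cpow_def_of_ne_zero (Complex.ofReal_ne_zero.mpr ha.ne') c,
    ← Complex.ofReal_log ha.le]

/- ## tanh facts -/

lemma myTanh_eq_exp (s : ℝ) :
    Real.tanh s = (Real.exp (2*s) - 1) / (Real.exp (2*s) + 1) := by
  have h : Real.exp (2*s) = Real.exp s * Real.exp s := by
    rw [two_mul, Real.exp_add]
  have he := Real.exp_pos s
  rw [Real.tanh_eq_sinh_div_cosh, Real.sinh_eq, Real.cosh_eq, Real.exp_neg, h]
  rw [div_eq_div_iff (by positivity) (by positivity)]
  field_simp

lemma myTanh_lt_one (s : ℝ) : Real.tanh s < 1 := by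
  rw [myTanh_eq_exp]
  have he := Real.exp_pos (2*s)
  rw [div_lt_one (by positivity)]
  linarith

lemma neg_one_lt_myTanh (s : ℝ) : -1 < Real.tanh s := by
  rw [myTanh_eq_exp]
  have he := Real.exp_pos (2*s)
  rw [lt_div_iff₀ (by positivity)]
  linarith

lemma myTanh_strictMono : StrictMono Real.tanh := by
  intro a b hab
  rw [myTanh_eq_exp, myTanh_eq_exp]
  have ha := Real.exp_pos (2*a)
  have hb := Real.exp_pos (2*b)
  have h : Real.exp (2*a) < Real.exp (2*b) := Real.exp_lt_exp.2 (by linarith)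
  rw [div_lt_div_iff₀ (by positivity) (by positivity)]
  nlinarith

lemma myHasDerivAt_tanh (s : ℝ) :
    HasDerivAt Real.tanh (1 - Real.tanh s ^ 2) s := by
  have hc := Real.cosh_pos s
  have h := (Real.hasDerivAt_sinh s).div (Real.hasDerivAt_cosh s) hc.ne'
  have key := Real.cosh_sq_sub_sinh_sq s
  have heq : Real.tanh = fun x => Real.sinh x / Real.cosh x := by
    funext x; exact Real.tanh_eq_sinh_div_cosh x
  rw [heq]
  refine h.congr_deriv ?_
  beta_reduce
  field_simp

lemma myTanh_image (α : ℝ) : Real.tanh '' Set.Ioi α = Set.Ioo (Real.tanh α) 1 := by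
  ext y
  constructor
  · rintro ⟨s, hs, rfl⟩
    exact ⟨myTanh_strictMono hs, myTanh_lt_one s⟩
  · rintro ⟨h1, h2⟩
    have hy2 : 0 < 1 + y := by have := neg_one_lt_myTanh α; linarith
    have hy1 : 0 < 1 - y := by linarith
    set s := Real.log ((1+y)/(1-y)) / 2 with hs
    have htanh : Real.tanh s = y := by
      rw [myTanh_eq_exp]
      have h2s : 2 * s = Real.log ((1+y)/(1-y)) := by rw [hs]; ring
      rw [h2s, Real.exp_log (by positivity)]
      rw [div_eq_iff]
      · field_simp
        ring
      · have : (0:ℝ) < (1+y)/(1-y) := by positivity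
        linarith
    refine ⟨s, ?_, htanh⟩
    have : Real.tanh α < Real.tanh s := by rw [htanh]; exact h1
    exact myTanh_strictMono.lt_iff_lt.mp this

lemma one_sub_tanh_sq (s : ℝ) : 1 - Real.tanh s ^ 2 = ((Real.cosh s) ^ 2)⁻¹ := by
  have hc := Real.cosh_pos s
  have key := Real.cosh_sq_sub_sinh_sq s
  rw [Real.tanh_eq_sinh_div_cosh]
  field_simp
  linarith

/- ## series form of ferrersP -/

lemma ferrersP_neg (ν m : ℂ) (t : ℝ) :
    ferrersP ν (-m) t = (((1 + t) / (1 - t) : ℝ) : ℂ) ^ (-m / 2) * SAux ν m t := by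
  unfold ferrersP SAux gcAux
  congr 1
  apply tsum_congr
  intro n
  rw [sub_neg_eq_add]
  rw [mul_comm (Complex.Gamma _) _, ← div_div]

/- ## prefactor computation -/

lemma pref (s : ℝ) (c : ℂ) :
    (((1 + Real.tanh s) / (1 - Real.tanh s) : ℝ) : ℂ) ^ (-c / 2) *
      ((Real.cosh s : ℝ) : ℂ) ^ (-c) = ((1 - Real.tanh s : ℝ) : ℂ) ^ c := by
  set t := Real.tanh s with ht
  have ht1 : t < 1 := myTanh_lt_one s
  have ht0 : -1 < t := neg_one_lt_myTanh s
  have h1t : (0:ℝ) < 1 - t := by linarith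
  have h1t' : (0:ℝ) < 1 + t := by linarith
  have hc := Real.cosh_pos s
  have hdivpos : (0:ℝ) < (1+t)/(1-t) := by positivity
  rw [cpowR_eq hdivpos, cpowR_eq hc, cpowR_eq h1t, ← Complex.exp_add]
  congr 1
  have hlogdiv : Real.log ((1+t)/(1-t)) = Real.log (1+t) - Real.log (1-t) :=
    Real.log_div h1t'.ne' h1t.ne'
  have hlogcosh : Real.log (Real.cosh s) = -(Real.log (1-t) + Real.log (1+t))/2 := by
    have hprod : (1-t)*(1+t) = ((Real.cosh s) ^ 2)⁻¹ := by
      rw [← one_sub_tanh_sq s, ← ht]; ring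
    have h2 := Real.log_mul h1t.ne' h1t'.ne'
    rw [hprod, Real.log_inv, Real.log_pow] at h2
    push_cast at h2
    linarith
  rw [hlogdiv, hlogcosh]
  push_cast
  ring

lemma integrand_eq (ν μ lam : ℂ) (x s : ℝ) :
    ((Real.cosh s : ℝ) : ℂ) ^ (-μ - 2) * ferrersP ν (-μ) (Real.tanh s) *
        ((Real.tanh s - x : ℝ) : ℂ) ^ lam =
      |1 - Real.tanh s ^ 2| •
        (((1 - Real.tanh s : ℝ) : ℂ) ^ μ * SAux ν μ (Real.tanh s) *
          ((Real.tanh s - x : ℝ) : ℂ) ^ lam) := by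
  set t := Real.tanh s with ht
  have ht1 : t < 1 := myTanh_lt_one s
  have ht0 : -1 < t := neg_one_lt_myTanh s
  have h1t : (0:ℝ) < 1 - t := by linarith
  have h1t' : (0:ℝ) < 1 + t := by linarith
  have hc := Real.cosh_pos s
  have hcC : ((Real.cosh s : ℝ) : ℂ) ≠ 0 := Complex.ofReal_ne_zero.mpr hc.ne'
  have habs : |1 - t ^ 2| = 1 - t ^ 2 := abs_of_pos (by nlinarith)
  have hsq : 1 - t ^ 2 = ((Real.cosh s) ^ 2)⁻¹ := by rw [ht]; exact one_sub_tanh_sq s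
  have hsplit : ((Real.cosh s : ℝ) : ℂ) ^ (-μ - 2) =
      ((Real.cosh s : ℝ) : ℂ) ^ (-μ) * ((1 - t ^ 2 : ℝ) : ℂ) := by
    have e : (-μ - 2 : ℂ) = -μ + (-2 : ℂ) := by ring
    rw [e, Complex.cpow_add _ _ hcC]
    congr 1
    have e2 : ((-2 : ℂ)) = (((-2 : ℝ)) : ℂ) := by norm_num
    rw [e2, ← Complex.ofReal_cpow hc.le]
    congr 1
    rw [show (-2:ℝ) = -(2:ℝ) by norm_num, Real.rpow_neg hc.le,
      show ((2:ℝ)) = ((2:ℕ):ℝ) by norm_num, Real.rpow_natCast]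
    rw [hsq]
  rw [ferrersP_neg ν μ t, hsplit, habs, Complex.real_smul, ← pref s μ, ← ht]
  ring


lemma affine_image (x : ℝ) (hx : x < 1) :
    (fun u : ℝ => (1-x)*u + x) '' Set.Ioo 0 1 = Set.Ioo x 1 := by
  ext t
  constructor
  · rintro ⟨u, ⟨hu0, hu1⟩, rfl⟩
    simp only []
    constructor <;> nlinarith
  · rintro ⟨ht0, ht1⟩
    have h1x : (0:ℝ) < 1 - x := by linarith
    refine ⟨(t - x)/(1-x), ⟨div_pos (by linarith) h1x, ?_⟩, ?_⟩
    · rw [div_lt_one (by linarith)]; linarith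
    · simp only []
      field_simp
      ring

lemma beta_integrable {p q : ℂ} (hp : -1 < p.re) (hq : -1 < q.re) {x : ℝ} (hx : x < 1) :
    IntegrableOn (fun t : ℝ => ((1 - t : ℝ) : ℂ) ^ p * ((t - x : ℝ) : ℂ) ^ q)
      (Set.Ioo x 1) volume ∧
    ∫ t in Set.Ioo x 1, ((1 - t : ℝ) : ℂ) ^ p * ((t - x : ℝ) : ℂ) ^ q =
      ((1 - x : ℝ) : ℂ) ^ (p + q + 1) *
        (Complex.Gamma (p+1) * Complex.Gamma (q+1) / Complex.Gamma (p+q+2)) := by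
  have h1x : (0:ℝ) < 1 - x := by linarith
  have h1xC : ((1 - x : ℝ) : ℂ) ≠ 0 := by
    simp only [ne_eq, Complex.ofReal_eq_zero]; linarith
  set g : ℝ → ℂ := fun t => ((1 - t : ℝ) : ℂ) ^ p * ((t - x : ℝ) : ℂ) ^ q with hg
  have hderiv : ∀ u ∈ Set.Ioo (0:ℝ) 1,
      HasDerivWithinAt (fun u : ℝ => (1-x)*u + x) (1-x) (Set.Ioo 0 1) u := by
    intro u _
    exact (((hasDerivAt_id u).const_mul (1-x)).add_const x).hasDerivWithinAt.congr_deriv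
      (by ring)
  have hinj : Set.InjOn (fun u : ℝ => (1-x)*u + x) (Set.Ioo 0 1) := by
    intro a _ b _ h
    simp only at h
    have : (1-x) * a = (1-x) * b := by linarith
    exact mul_left_cancel₀ (by linarith) this
  -- pointwise form on Ioo 0 1
  have hpt : ∀ u ∈ Set.Ioo (0:ℝ) 1,
      |1 - x| • g ((1-x)*u + x) =
        ((1-x:ℝ):ℂ) ^ (p+q+1) * (((u:ℝ):ℂ) ^ q * ((1 - u : ℝ):ℂ) ^ p) := by
    intro u ⟨hu0, hu1⟩
    have e1 : (1 - ((1-x)*u + x) : ℝ) = (1-x) * (1-u) := by ring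
    have e2 : (((1-x)*u + x) - x : ℝ) = (1-x) * u := by ring
    rw [hg]
    simp only [e1, e2]
    rw [Complex.ofReal_mul, Complex.ofReal_mul,
      Complex.mul_cpow_ofReal_nonneg h1x.le (by linarith),
      Complex.mul_cpow_ofReal_nonneg h1x.le hu0.le,
      Complex.cpow_add _ _ h1xC, Complex.cpow_add _ _ h1xC, Complex.cpow_one,
      abs_of_pos h1x, Complex.real_smul]
    ring
  -- the beta integrand on 0..1
  have hbeta0 : IntervalIntegrable
      (fun u : ℝ => ((u:ℝ):ℂ) ^ ((q+1) - 1) * (1 - ((u:ℝ):ℂ)) ^ ((p+1) - 1)) volume 0 1 :=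
    Complex.betaIntegral_convergent (by simp [hq]; linarith) (by simp [hp]; linarith)
  have hbeta0' : IntegrableOn (fun u : ℝ => ((u:ℝ):ℂ) ^ q * ((1 - u : ℝ):ℂ) ^ p)
      (Set.Ioo (0:ℝ) 1) volume := by
    have := (intervalIntegrable_iff_integrableOn_Ioc_of_le (by norm_num : (0:ℝ) ≤ 1)).mp hbeta0
    rw [← integrableOn_Ioc_iff_integrableOn_Ioo]
    refine this.congr_fun (fun u hu => ?_) measurableSet_Ioc
    push_cast
    simp
  have himg := affine_image x hx
  have hiff := integrableOn_image_iff_integrableOn_abs_deriv_smul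
    measurableSet_Ioo hderiv hinj g
  rw [himg] at hiff
  have hint1 : IntegrableOn
      (fun u : ℝ => ((1-x:ℝ):ℂ) ^ (p+q+1) * (((u:ℝ):ℂ) ^ q * ((1 - u : ℝ):ℂ) ^ p))
      (Set.Ioo (0:ℝ) 1) volume := hbeta0'.const_mul _
  have hint2 : IntegrableOn (fun u : ℝ => |1 - x| • g ((1-x)*u + x))
      (Set.Ioo (0:ℝ) 1) volume :=
    hint1.congr_fun (fun u hu => (hpt u hu).symm) measurableSet_Ioo
  have hgint : IntegrableOn g (Set.Ioo x 1) volume := hiff.mpr hint2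
  refine ⟨hgint, ?_⟩
  have hval := integral_image_eq_integral_abs_deriv_smul
    measurableSet_Ioo hderiv hinj g
  rw [himg] at hval
  rw [hval, setIntegral_congr_fun measurableSet_Ioo hpt, integral_const_mul]
  congr 1
  have hIoo : ∫ u in Set.Ioo (0:ℝ) 1, ((u:ℝ):ℂ) ^ q * ((1 - u : ℝ):ℂ) ^ p =
      Complex.betaIntegral (q+1) (p+1) := by
    rw [Complex.betaIntegral, intervalIntegral.integral_of_le (by norm_num : (0:ℝ) ≤ 1),
      ← integral_Ioc_eq_integral_Ioo]
    refine setIntegral_congr_fun measurableSet_Ioc (fun u hu => ?_)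
    push_cast
    simp
  rw [hIoo]
  have hG := Complex.Gamma_mul_Gamma_eq_betaIntegral
    (show 0 < (q+1).re by simp; linarith) (show 0 < (p+1).re by simp; linarith)
  have hne : Complex.Gamma (p+q+2) ≠ 0 := by
    apply Complex.Gamma_ne_zero_of_re_pos
    simp [Complex.add_re]; linarith
  have harg : q + 1 + (p + 1) = p + q + 2 := by ring
  rw [harg] at hG
  rw [eq_div_iff hne]
  rw [mul_comm] at hG
  rw [mul_comm ((q+1).betaIntegral (p+1)), ← hG]


lemma tendsto_ratio (a b : ℝ) :
    Tendsto (fun n : ℕ => ((n:ℝ)+1+a)/((n:ℝ)+1+b)) atTop (𝓝 1) := by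
  have hb : Tendsto (fun n : ℕ => (n:ℝ)+1+b) atTop atTop := by
    have := tendsto_natCast_atTop_atTop (R := ℝ)
    exact tendsto_atTop_add_const_right _ (1+b) this |>.congr (fun n => by ring)
  have h0 : Tendsto (fun n : ℕ => (a-b)/((n:ℝ)+1+b)) atTop (𝓝 0) :=
    Tendsto.div_atTop tendsto_const_nhds hb
  have h1 : Tendsto (fun n : ℕ => 1 + (a-b)/((n:ℝ)+1+b)) atTop (𝓝 1) := by
    have := (tendsto_const_nhds : Tendsto (fun _ : ℕ => (1:ℝ)) atTop (𝓝 1)).add h0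
    simpa using this
  refine h1.congr' ?_
  filter_upwards [hb.eventually_gt_atTop 0] with n hn
  field_simp
  ring

lemma summable_main (ν μ' : ℂ) (hμ' : -1 < μ'.re) {r : ℝ} (hr0 : 0 ≤ r) (hr : r < 1) :
    Summable (fun n : ℕ =>
      ‖pochC (-ν) n * pochC (ν+1) n /
        ((n.factorial : ℂ) * Complex.Gamma ((n:ℂ) + 1 + μ'))‖ * r ^ n) := by
  set a := ‖ν‖ + 1 with ha
  set b := ‖μ'‖ with hb
  set f : ℕ → ℝ := fun n => ‖pochC (-ν) n * pochC (ν+1) n /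
        ((n.factorial : ℂ) * Complex.Gamma ((n:ℂ) + 1 + μ'))‖ * r ^ n with hf
  have hfnonneg : ∀ n, 0 ≤ f n := fun n => by positivity
  set ρ := (1+r)/2 with hρdef
  have hrρ : r < ρ := by rw [hρdef]; linarith
  have hρ1 : ρ < 1 := by rw [hρdef]; linarith
  -- positivity facts
  have hrepos : ∀ n : ℕ, (0:ℝ) < ((n:ℂ) + 1 + μ').re := by
    intro n
    simp only [Complex.add_re, Complex.natCast_re, Complex.one_re]
    have : (0:ℝ) ≤ n := Nat.cast_nonneg n
    linarith
  have hargne : ∀ n : ℕ, ((n:ℂ) + 1 + μ') ≠ 0 := by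
    intro n h
    have := hrepos n
    rw [h] at this
    simp at this
  have hGne : ∀ n : ℕ, Complex.Gamma ((n:ℂ) + 1 + μ') ≠ 0 :=
    fun n => Complex.Gamma_ne_zero_of_re_pos (hrepos n)
  have hnormarg : ∀ n : ℕ, (n:ℝ) + 1 - b ≤ ‖(n:ℂ) + 1 + μ'‖ := by
    intro n
    have h1 : ‖(n:ℂ) + 1‖ = (n:ℝ) + 1 := by
      have : ((n:ℂ) + 1) = (((n+1:ℕ)):ℂ) := by push_cast; ring
      rw [this, Complex.norm_natCast]; push_cast; ring
    have h2 := norm_add_le ((n:ℂ) + 1 + μ') (-μ')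
    simp only [add_neg_cancel_right, norm_neg] at h2
    rw [h1] at h2
    rw [hb]; linarith
  -- the ratio function
  set w : ℕ → ℝ := fun n =>
    ‖-ν + n‖ * ‖ν + 1 + n‖ * r / (((n:ℝ)+1) * ‖(n:ℂ) + 1 + μ'‖) with hw
  have key : ∀ n : ℕ, f (n+1) = w n * f n := by
    intro n
    have hA : pochC (-ν) (n+1) * pochC (ν+1) (n+1)
        = (pochC (-ν) n * pochC (ν+1) n) * ((-ν + n) * (ν + 1 + n)) := by
      rw [pochC_succ, pochC_succ]; ring
    have hfac : ((n+1).factorial : ℂ) = ((n:ℂ)+1) * (n.factorial : ℂ) := by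
      rw [Nat.factorial_succ]; push_cast; ring
    have hGamma : Complex.Gamma (((n+1:ℕ):ℂ) + 1 + μ')
        = ((n:ℂ) + 1 + μ') * Complex.Gamma ((n:ℂ) + 1 + μ') := by
      have harg : (((n+1:ℕ):ℂ) + 1 + μ') = ((n:ℂ) + 1 + μ') + 1 := by push_cast; ring
      rw [harg, Complex.Gamma_add_one _ (hargne n)]
    rw [hf, hw]
    simp only [hA, hfac, hGamma]
    simp only [norm_div, norm_mul]
    have hn1 : ‖(n:ℂ) + 1‖ = (n:ℝ) + 1 := by
      have : ((n:ℂ) + 1) = (((n+1:ℕ)):ℂ) := by push_cast; ring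
      rw [this, Complex.norm_natCast]; push_cast; ring
    rw [hn1]
    have hd1 : (0:ℝ) < (n:ℝ) + 1 := by positivity
    have hd2 : (0:ℝ) < ‖(n:ℂ) + 1 + μ'‖ := norm_pos_iff.mpr (hargne n)
    have hd3 : (0:ℝ) < ‖(n.factorial : ℂ)‖ := by
      rw [Complex.norm_natCast]
      exact_mod_cast Nat.factorial_pos n
    have hd4 : (0:ℝ) < ‖Complex.Gamma ((n:ℂ) + 1 + μ')‖ := norm_pos_iff.mpr (hGne n)
    rw [pow_succ]
    field_simp
  -- eventual bound on w
  set u : ℕ → ℝ := fun n =>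
    r * ((((n:ℝ)+1+a)/((n:ℝ)+1)) * (((n:ℝ)+1+a)/((n:ℝ)+1+(-b)))) with hu
  have hu_tendsto : Tendsto u atTop (𝓝 r) := by
    have t1 : Tendsto (fun n : ℕ => ((n:ℝ)+1+a)/((n:ℝ)+1)) atTop (𝓝 1) := by
      have := tendsto_ratio a 0
      simpa using this
    have := (tendsto_const_nhds : Tendsto (fun _ : ℕ => r) atTop (𝓝 r)).mul
      (t1.mul (tendsto_ratio a (-b)))
    simpa using this
  have hwu : ∀ᶠ n in atTop, w n ≤ u n := by
    filter_upwards [eventually_ge_atTop (⌈b⌉₊ + 1)] with n hn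
    have hnb : b < (n:ℝ) := by
      calc b ≤ ⌈b⌉₊ := Nat.le_ceil b
      _ < (⌈b⌉₊ : ℝ) + 1 := by linarith
      _ ≤ (n:ℝ) := by exact_mod_cast hn
    have hden1 : (0:ℝ) < (n:ℝ) + 1 + (-b) := by linarith
    have hnum1 : ‖-ν + (n:ℂ)‖ ≤ (n:ℝ) + 1 + a := by
      calc ‖-ν + (n:ℂ)‖ ≤ ‖(-ν : ℂ)‖ + ‖(n:ℂ)‖ := norm_add_le _ _
      _ = ‖ν‖ + (n:ℝ) := by rw [norm_neg, Complex.norm_natCast]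
      _ ≤ (n:ℝ) + 1 + a := by rw [ha]; linarith
    have hnum2 : ‖ν + 1 + (n:ℂ)‖ ≤ (n:ℝ) + 1 + a := by
      calc ‖ν + 1 + (n:ℂ)‖ ≤ ‖ν + 1‖ + ‖(n:ℂ)‖ := norm_add_le _ _
      _ ≤ ‖ν‖ + 1 + (n:ℝ) := by
          rw [Complex.norm_natCast]
          have := norm_add_le ν (1:ℂ)
          simp only [norm_one] at this
          linarith
      _ ≤ (n:ℝ) + 1 + a := by rw [ha]; linarith
    have harg2 : (n:ℝ) + 1 + (-b) ≤ ‖(n:ℂ) + 1 + μ'‖ := by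
      have := hnormarg n; linarith
    rw [hw, hu]
    simp only []
    rw [div_mul_div_comm, ← mul_div_assoc]
    apply div_le_div₀ (by positivity)
    · have h1 : ‖-ν + (n:ℂ)‖ * ‖ν + 1 + (n:ℂ)‖ * r ≤ (((n:ℝ)+1+a) * (((n:ℝ)+1+a))) * r := by
        apply mul_le_mul_of_nonneg_right _ hr0
        exact mul_le_mul hnum1 hnum2 (norm_nonneg _) (by positivity)
      calc ‖-ν + (n:ℂ)‖ * ‖ν + 1 + (n:ℂ)‖ * r ≤ (((n:ℝ)+1+a) * ((n:ℝ)+1+a)) * r := h1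
      _ = r * (((n:ℝ)+1+a) * ((n:ℝ)+1+a)) := by ring
    · positivity
    · apply mul_le_mul_of_nonneg_left harg2 (by positivity)
  have hurho : ∀ᶠ n in atTop, u n < ρ := hu_tendsto.eventually_lt_const hrρ
  apply summable_of_ratio_norm_eventually_le hρ1
  filter_upwards [hwu, hurho] with n hn1 hn2
  rw [Real.norm_of_nonneg (hfnonneg (n+1)), Real.norm_of_nonneg (hfnonneg n), key n]
  have hwρ : w n ≤ ρ := le_of_lt (lt_of_le_of_lt hn1 hn2)
  exact mul_le_mul_of_nonneg_right hwρ (hfnonneg n)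

end Aux

lemma Phi_tsum (ν μ lam : ℂ) (x : ℝ) {t : ℝ} (ht : t < 1) :
    ((1 - t : ℝ) : ℂ) ^ μ * SAux ν μ t * ((t - x : ℝ) : ℂ) ^ lam =
      ∑' n : ℕ, FAux ν μ lam x n t := by
  have h1t : ((1 - t : ℝ) : ℂ) ≠ 0 := Complex.ofReal_ne_zero.mpr (by linarith)
  have hstep : ((1 - t : ℝ) : ℂ) ^ μ * SAux ν μ t * ((t - x : ℝ) : ℂ) ^ lam =
      ∑' n : ℕ, ((1 - t : ℝ) : ℂ) ^ μ *
        (gcAux ν n / Complex.Gamma ((n : ℂ) + 1 + μ) * (((1 - t) / 2 : ℝ) : ℂ) ^ n) *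
        ((t - x : ℝ) : ℂ) ^ lam := by
    unfold SAux
    rw [← tsum_mul_left, ← tsum_mul_right]
  rw [hstep]
  apply tsum_congr
  intro n
  unfold FAux
  have e4 : (((1 - t) / 2 : ℝ) : ℂ) ^ n = ((1 - t : ℝ) : ℂ) ^ n / 2 ^ n := by
    push_cast
    rw [div_pow]
  have e5 : ((1 - t : ℝ) : ℂ) ^ (μ + (n : ℂ)) =
      ((1 - t : ℝ) : ℂ) ^ μ * ((1 - t : ℝ) : ℂ) ^ (n : ℕ) := by
    rw [Complex.cpow_add _ _ h1t, Complex.cpow_natCast]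
  rw [e4, e5]
  have h2n : ((2 : ℂ)) ^ n ≠ 0 := by norm_num
  field_simp

theorem stmt5 (α : ℝ) (ν μ lam : ℂ) (hμ : -1 < μ.re) (hlam : -1 < lam.re) :
    ferrersP ν (-μ - lam - 1) (Real.tanh α) * ((Real.cosh α : ℝ) : ℂ) ^ (-μ - lam - 1) =
      (1 / Complex.Gamma (lam + 1)) *
        ∫ s in Set.Ioi α,
          ((Real.cosh s : ℝ) : ℂ) ^ (-μ - 2) * ferrersP ν (-μ) (Real.tanh s) *
            ((Real.tanh s - Real.tanh α : ℝ) : ℂ) ^ lam := by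
  have hx1 : Real.tanh α < 1 := myTanh_lt_one α
  have hx0 : -1 < Real.tanh α := neg_one_lt_myTanh α
  set x := Real.tanh α with hxdef
  have h1x : (0:ℝ) < 1 - x := by linarith
  have h1xC : ((1 - x : ℝ) : ℂ) ≠ 0 := Complex.ofReal_ne_zero.mpr (by linarith)
  have hΓlam : Complex.Gamma (lam + 1) ≠ 0 := by
    apply Complex.Gamma_ne_zero_of_re_pos
    simp only [Complex.add_re, Complex.one_re]
    linarith
  have hpn : ∀ n : ℕ, -1 < (μ + (n:ℂ)).re := by
    intro n
    simp only [Complex.add_re, Complex.natCast_re]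
    have : (0:ℝ) ≤ n := Nat.cast_nonneg n
    linarith
  have hΓμn : ∀ n : ℕ, Complex.Gamma ((n:ℂ) + 1 + μ) ≠ 0 := by
    intro n
    apply Complex.Gamma_ne_zero_of_re_pos
    simp only [Complex.add_re, Complex.natCast_re, Complex.one_re]
    have : (0:ℝ) ≤ n := Nat.cast_nonneg n
    linarith
  have hr0 : (0:ℝ) ≤ (1-x)/2 := by linarith
  have hr1 : (1-x)/2 < 1 := by linarith
  -- Step 1 : change of variables
  have hR1 : (∫ s in Set.Ioi α,
      ((Real.cosh s : ℝ) : ℂ) ^ (-μ - 2) * ferrersP ν (-μ) (Real.tanh s) *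
        ((Real.tanh s - x : ℝ) : ℂ) ^ lam) =
      ∫ t in Set.Ioo x 1,
        ((1 - t : ℝ) : ℂ) ^ μ * SAux ν μ t * ((t - x : ℝ) : ℂ) ^ lam := by
    have hchg := integral_image_eq_integral_abs_deriv_smul (s := Set.Ioi α) measurableSet_Ioi
      (fun s _ => (myHasDerivAt_tanh s).hasDerivWithinAt)
      (myTanh_strictMono.injective.injOn)
      (fun t => ((1 - t : ℝ) : ℂ) ^ μ * SAux ν μ t * ((t - x : ℝ) : ℂ) ^ lam)
    rw [myTanh_image α, ← hxdef] at hchg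
    rw [hchg]
    exact setIntegral_congr_fun measurableSet_Ioi (fun s _ => integrand_eq ν μ lam x s)
  -- Step 2 : expand into a sum
  have hR2 : (∫ t in Set.Ioo x 1,
      ((1 - t : ℝ) : ℂ) ^ μ * SAux ν μ t * ((t - x : ℝ) : ℂ) ^ lam) =
      ∫ t in Set.Ioo x 1, ∑' n : ℕ, FAux ν μ lam x n t :=
    setIntegral_congr_fun measurableSet_Ioo (fun t ht => Phi_tsum ν μ lam x ht.2)
  have hFint : ∀ n : ℕ, IntegrableOn (FAux ν μ lam x n) (Set.Ioo x 1) volume := by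
    intro n
    exact ((beta_integrable (hpn n) hlam hx1).1.const_mul _)
  -- Step 3 : swap sum and integral
  have hswap : ∑' n : ℕ, (∫ t in Set.Ioo x 1, FAux ν μ lam x n t) =
      ∫ t in Set.Ioo x 1, ∑' n : ℕ, FAux ν μ lam x n t := by
    apply integral_tsum_of_summable_integral_norm hFint
    have hbase : IntegrableOn
        (fun t : ℝ => ((1 - t : ℝ) : ℂ) ^ μ * ((t - x : ℝ) : ℂ) ^ lam)
        (Set.Ioo x 1) volume := (beta_integrable hμ hlam hx1).1
    set C0 : ℝ := ∫ t in Set.Ioo x 1, ‖((1 - t : ℝ):ℂ)^μ * ((t - x : ℝ):ℂ)^lam‖ with hC0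
    have hbound : ∀ n : ℕ, (∫ t in Set.Ioo x 1, ‖FAux ν μ lam x n t‖) ≤
        ‖pochC (-ν) n * pochC (ν+1) n /
          ((n.factorial:ℂ) * Complex.Gamma ((n:ℂ)+1+μ))‖ * ((1-x)/2)^n * C0 := by
      intro n
      have hint2 : IntegrableOn
          (fun t : ℝ => ‖pochC (-ν) n * pochC (ν+1) n /
              ((n.factorial:ℂ) * Complex.Gamma ((n:ℂ)+1+μ))‖ * ((1-x)/2)^n *
            ‖((1 - t : ℝ):ℂ)^μ * ((t - x : ℝ):ℂ)^lam‖) (Set.Ioo x 1) volume :=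
        (hbase.norm.const_mul _)
      have hpt : ∀ t ∈ Set.Ioo x (1:ℝ), ‖FAux ν μ lam x n t‖ ≤
          ‖pochC (-ν) n * pochC (ν+1) n /
            ((n.factorial:ℂ) * Complex.Gamma ((n:ℂ)+1+μ))‖ * ((1-x)/2)^n *
            ‖((1 - t : ℝ):ℂ)^μ * ((t - x : ℝ):ℂ)^lam‖ := by
        intro t htm
        obtain ⟨htx, ht1⟩ := htm
        have h1t : (0:ℝ) < 1 - t := by linarith
        have e0 : gcAux ν n / Complex.Gamma ((n:ℂ)+1+μ) =
            pochC (-ν) n * pochC (ν+1) n /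
              ((n.factorial:ℂ) * Complex.Gamma ((n:ℂ)+1+μ)) := by
          unfold gcAux
          rw [div_div]
        have hA : ‖((1 - t : ℝ):ℂ) ^ (μ + (n:ℂ))‖ = (1-t) ^ μ.re * (1-t)^n := by
          rw [Complex.norm_cpow_eq_rpow_re_of_pos h1t]
          simp only [Complex.add_re, Complex.natCast_re]
          rw [Real.rpow_add h1t, Real.rpow_natCast]
        have hA0 : ‖((1 - t : ℝ):ℂ) ^ μ‖ = (1-t) ^ μ.re := by
          rw [Complex.norm_cpow_eq_rpow_re_of_pos h1t]
        have h2n : ‖((2:ℂ)) ^ n‖ = 2^n := by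
          rw [norm_pow]
          norm_num
        have hpow : (1-t)^n ≤ (1-x)^n := pow_le_pow_left₀ h1t.le (by linarith) n
        unfold FAux
        rw [e0, norm_mul, norm_div, h2n, norm_mul, hA, norm_mul, hA0]
        have hC : (0:ℝ) ≤ ‖pochC (-ν) n * pochC (ν+1) n /
            ((n.factorial:ℂ) * Complex.Gamma ((n:ℂ)+1+μ))‖ := norm_nonneg _
        have hB : (0:ℝ) ≤ ‖((t - x : ℝ):ℂ)^lam‖ := norm_nonneg _
        have hP : (0:ℝ) ≤ (1-t) ^ μ.re := Real.rpow_nonneg h1t.le _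
        calc ‖pochC (-ν) n * pochC (ν+1) n /
              ((n.factorial:ℂ) * Complex.Gamma ((n:ℂ)+1+μ))‖ / 2^n *
              ((1-t) ^ μ.re * (1-t)^n * ‖((t - x : ℝ):ℂ)^lam‖)
            = (‖pochC (-ν) n * pochC (ν+1) n /
                ((n.factorial:ℂ) * Complex.Gamma ((n:ℂ)+1+μ))‖ / 2^n *
                ((1-t) ^ μ.re * ‖((t - x : ℝ):ℂ)^lam‖)) * (1-t)^n := by ring
          _ ≤ (‖pochC (-ν) n * pochC (ν+1) n /
                ((n.factorial:ℂ) * Complex.Gamma ((n:ℂ)+1+μ))‖ / 2^n *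
                ((1-t) ^ μ.re * ‖((t - x : ℝ):ℂ)^lam‖)) * (1-x)^n := by
              apply mul_le_mul_of_nonneg_left hpow
              positivity
          _ = ‖pochC (-ν) n * pochC (ν+1) n /
                ((n.factorial:ℂ) * Complex.Gamma ((n:ℂ)+1+μ))‖ * ((1-x)/2)^n *
                ((1-t) ^ μ.re * ‖((t - x : ℝ):ℂ)^lam‖) := by
              rw [div_pow]
              ring
      calc (∫ t in Set.Ioo x 1, ‖FAux ν μ lam x n t‖)
          ≤ ∫ t in Set.Ioo x 1, ‖pochC (-ν) n * pochC (ν+1) n /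
              ((n.factorial:ℂ) * Complex.Gamma ((n:ℂ)+1+μ))‖ * ((1-x)/2)^n *
              ‖((1 - t : ℝ):ℂ)^μ * ((t - x : ℝ):ℂ)^lam‖ :=
            setIntegral_mono_on (hFint n).norm hint2 measurableSet_Ioo hpt
        _ = ‖pochC (-ν) n * pochC (ν+1) n /
              ((n.factorial:ℂ) * Complex.Gamma ((n:ℂ)+1+μ))‖ * ((1-x)/2)^n * C0 := by
            rw [hC0, integral_const_mul]
    apply Summable.of_nonneg_of_le
      (fun n => integral_nonneg (fun t => norm_nonneg _)) hbound
    exact (summable_main ν μ hμ hr0 hr1).mul_right C0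
  -- Step 4 : the value of each integral
  have hvals : ∀ n : ℕ, (∫ t in Set.Ioo x 1, FAux ν μ lam x n t) =
      (gcAux ν n / Complex.Gamma ((n:ℂ)+1+μ) / 2^n) *
        (((1-x:ℝ):ℂ) ^ ((μ+(n:ℂ)) + lam + 1) *
          (Complex.Gamma ((μ+(n:ℂ))+1) * Complex.Gamma (lam+1) /
            Complex.Gamma ((μ+(n:ℂ))+lam+2))) := by
    intro n
    unfold FAux
    rw [integral_const_mul, (beta_integrable (hpn n) hlam hx1).2]
  -- Step 5 : the left-hand side
  have hLHS : ferrersP ν (-μ - lam - 1) x * ((Real.cosh α : ℝ):ℂ) ^ (-μ - lam - 1) =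
      ((1-x:ℝ):ℂ) ^ (μ+lam+1) * SAux ν (μ+lam+1) x := by
    have e : (-μ - lam - 1 : ℂ) = -(μ+lam+1) := by ring
    rw [e, ferrersP_neg ν (μ+lam+1) x]
    have hp := pref α (μ+lam+1)
    rw [← hxdef] at hp
    rw [mul_right_comm, hp]
  rw [hLHS, hR1, hR2, ← hswap, tsum_congr hvals]
  unfold SAux
  rw [← tsum_mul_left, ← tsum_mul_left]
  apply tsum_congr
  intro n
  have e1 : Complex.Gamma ((μ+(n:ℂ))+1) = Complex.Gamma ((n:ℂ)+1+μ) := by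
    rw [show (μ+(n:ℂ))+1 = (n:ℂ)+1+μ by ring]
  have e2 : Complex.Gamma ((μ+(n:ℂ))+lam+2) = Complex.Gamma ((n:ℂ)+1+(μ+lam+1)) := by
    rw [show (μ+(n:ℂ))+lam+2 = (n:ℂ)+1+(μ+lam+1) by ring]
  have e3 : ((1-x:ℝ):ℂ) ^ ((μ+(n:ℂ))+lam+1) =
      ((1-x:ℝ):ℂ) ^ (μ+lam+1) * ((1-x:ℝ):ℂ) ^ (n:ℕ) := by
    rw [show (μ+(n:ℂ))+lam+1 = (μ+lam+1) + (n:ℂ) by ring,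
      Complex.cpow_add _ _ h1xC, Complex.cpow_natCast]
  have e4 : (((1-x)/2 : ℝ):ℂ) ^ n = ((1-x:ℝ):ℂ) ^ n / 2^n := by
    push_cast
    rw [div_pow]
  have hΓ2 : Complex.Gamma ((n:ℂ)+1+(μ+lam+1)) ≠ 0 := by
    apply Complex.Gamma_ne_zero_of_re_pos
    simp only [Complex.add_re, Complex.natCast_re, Complex.one_re]
    have : (0:ℝ) ≤ n := Nat.cast_nonneg n
    linarith
  have h2n : ((2:ℂ))^n ≠ 0 := by norm_num
  rw [e1, e2, e3, e4]
  field_simp [hΓlam, hΓ2, hΓμn n, h2n]
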